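/- Let {K_i} be a tower of number fields with K_0 = K, and let p be a nonzero prime ideal of O_K that splits completely in K_i for every i. Suppose φ_∞ = lim_{i→∞} [K_i:ℚ]/g_{K_i} exists and is strictly positive. Then liminf_{i→∞} Φ_{Np}(K_i)/g_{K_i} ≥ φ_∞/[K:ℚ] > 0, where Np is the absolute norm of p. -/

import Mathlib

open NumberField Filter Topology

noncomputable section

/-- A fixed algebraic closure of `ℚ`; towers of number fields live inside it. -/
abbrev Qbar : Type := AlgebraicClosure ℚ

instance (K : IntermediateField ℚ Qbar) [FiniteDimensional ℚ K] : NumberField K := ⟨⟩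

open scoped Classical in
/-- The genus of a number field: `g_K = (1/2)·log |d_K|` (junk value `0` if `K` is not a
number field). -/
def genus (K : IntermediateField ℚ Qbar) : ℝ :=
  if h : FiniteDimensional ℚ K then
    letI := h
    Real.log |(NumberField.discr K : ℝ)| / 2
  else 0

open scoped Classical in
/-- `Φ_q(K)`: the number of nonzero prime ideals of `O_K` of absolute norm `q`
(junk value `0` if `K` is not a number field). -/
def PhiQ (K : IntermediateField ℚ Qbar) (q : ℕ) : ℕ :=
  if h : FiniteDimensional ℚ K then
    letI := h
    Nat.card {P : Ideal (𝓞 K) // P.IsPrime ∧ Ideal.absNorm P = q}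
  else 0

/-- `Φ_ℝ(K)`: the number of real places of `K`. -/
def PhiR (K : IntermediateField ℚ Qbar) : ℕ :=
  Nat.card {w : InfinitePlace K // w.IsReal}

/-- `Φ_ℂ(K)`: the number of complex places of `K`. -/
def PhiC (K : IntermediateField ℚ Qbar) : ℕ :=
  Nat.card {w : InfinitePlace K // w.IsComplex}

/-- A rational prime `p` splits completely in `L` if every prime of `O_L` above `p` has
ramification index `1` and residue degree `1` over `p`. -/
def SplitsCompletelyRat (p : ℕ) (L : IntermediateField ℚ Qbar) : Prop :=
  ∀ P : Ideal (𝓞 L), P.IsPrime → (p : 𝓞 L) ∈ P →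
    Ideal.ramificationIdx' (Ideal.span {(p : ℤ)}) P = 1 ∧
    Ideal.inertiaDeg' (Ideal.span {(p : ℤ)}) P = 1

/-- A nonzero prime `p` of `O_K` splits completely in `L ⊇ K` if every prime of `O_L`
lying over it has ramification index `1` and residue degree `1` over it. -/
def SplitsCompletely {K L : IntermediateField ℚ Qbar} (h : K ≤ L)
    (p : Ideal (𝓞 K)) : Prop :=
  ∀ P : Ideal (𝓞 L), P.IsPrime →
    Ideal.comap (RingOfIntegers.mapRingHom (IntermediateField.inclusion h)) P = p →
    letI : Algebra (𝓞 K) (𝓞 L) :=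
      RingHom.toAlgebra (RingOfIntegers.mapRingHom (IntermediateField.inclusion h))
    Ideal.ramificationIdx' p P = 1 ∧
    Ideal.inertiaDeg' p P = 1

open Ideal in
theorem aux_upper {S : Type*} [CommRing S] [IsDedekindDomain S] [Nontrivial S]
    [Module.Free ℤ S] [Module.Finite ℤ S] [CharZero S] {q : ℕ} (hq : 2 ≤ q) :
    Nat.card {P : Ideal S // P.IsPrime ∧ Ideal.absNorm P = q} ≤ q * Module.finrank ℤ S := by
  classical
  set I : Ideal S := Ideal.span {(q : S)} with hI
  have hq0 : (q : S) ≠ 0 := Nat.cast_ne_zero.mpr (by omega)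
  have hI0 : I ≠ ⊥ := by simpa [hI, Ideal.span_singleton_eq_bot] using hq0
  have hmem : ∀ P : {P : Ideal S // P.IsPrime ∧ Ideal.absNorm P = q},
      P.1 ∈ (UniqueFactorizationMonoid.normalizedFactors I).toFinset := by
    rintro ⟨P, hP, hPq⟩
    rw [Multiset.mem_toFinset, Ideal.mem_normalizedFactors_iff hI0]
    refine ⟨hP, ?_⟩
    rw [hI, Ideal.span_le, Set.singleton_subset_iff]
    have := Ideal.absNorm_mem P
    rwa [hPq] at this
  have hinj : Function.Injective (fun P : {P : Ideal S // P.IsPrime ∧ Ideal.absNorm P = q} =>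
      (⟨P.1, hmem P⟩ : (UniqueFactorizationMonoid.normalizedFactors I).toFinset)) :=
    by intro a b h; simpa [Subtype.ext_iff] using h
  have h1 : Nat.card {P : Ideal S // P.IsPrime ∧ Ideal.absNorm P = q}
      ≤ (UniqueFactorizationMonoid.normalizedFactors I).toFinset.card := by
    have := Nat.card_le_card_of_injective _ hinj
    rwa [Nat.card_eq_finsetCard] at this
  set m := Multiset.card (UniqueFactorizationMonoid.normalizedFactors I) with hm
  have h2 : (UniqueFactorizationMonoid.normalizedFactors I).toFinset.card ≤ m :=
    Multiset.toFinset_card_le _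
  have h3 : 2 ^ m ≤ Ideal.absNorm I := by
    have hItot : (UniqueFactorizationMonoid.normalizedFactors I).prod = I :=
      associated_iff_eq.mp (UniqueFactorizationMonoid.prod_normalizedFactors hI0)
    have hprod : Ideal.absNorm ((UniqueFactorizationMonoid.normalizedFactors I).prod)
        = ((UniqueFactorizationMonoid.normalizedFactors I).map Ideal.absNorm).prod :=
      map_multiset_prod _ _
    have hbound : (2 : ℕ) ^ m
        ≤ ((UniqueFactorizationMonoid.normalizedFactors I).map Ideal.absNorm).prod := by
      have := Multiset.pow_card_le_prod
        (s := (UniqueFactorizationMonoid.normalizedFactors I).map Ideal.absNorm) (a := (2:ℕ)) ?_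
      · rwa [Multiset.card_map] at this
      · intro x hx
        obtain ⟨Q, hQ, rfl⟩ := Multiset.mem_map.mp hx
        have hQp : Prime Q := UniqueFactorizationMonoid.prime_of_normalized_factor Q hQ
        have h0 : Ideal.absNorm Q ≠ 0 := by
          rw [Ne, Ideal.absNorm_eq_zero_iff]; exact hQp.ne_zero
        have h1 : Ideal.absNorm Q ≠ 1 := by
          rw [Ne, Ideal.absNorm_eq_one_iff]; exact (Ideal.isPrime_of_prime hQp).ne_top
        omega
    calc (2:ℕ) ^ m ≤ _ := hbound
      _ = Ideal.absNorm I := by rw [← hprod, hItot]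
  have h4 : Ideal.absNorm I = q ^ Module.finrank ℤ S := by
    rw [hI, Ideal.absNorm_span_singleton,
      show ((q : S)) = algebraMap ℤ S (q : ℤ) by simp,
      Algebra.norm_algebraMap_of_basis (Module.Free.chooseBasis ℤ S),
      Module.finrank_eq_card_chooseBasisIndex ℤ S]
    simp [Int.natAbs_pow]
  have h5 : (2:ℕ) ^ m ≤ 2 ^ (q * Module.finrank ℤ S) := by
    calc (2:ℕ) ^ m ≤ q ^ Module.finrank ℤ S := h3.trans_eq h4
      _ ≤ (2 ^ q) ^ Module.finrank ℤ S := Nat.pow_le_pow_left (Nat.lt_two_pow_self (n := q)).le _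
      _ = 2 ^ (q * Module.finrank ℤ S) := by rw [← pow_mul]
  have h6 : m ≤ q * Module.finrank ℤ S := (Nat.pow_le_pow_iff_right (by norm_num)).mp h5
  omega




open Ideal Module UniqueFactorizationMonoid in
theorem aux_lower {R S : Type*} [CommRing R] [IsDedekindDomain R] [Nontrivial R]
    [Module.Free ℤ R] [Module.Finite ℤ R]
    [CommRing S] [IsDedekindDomain S] [Nontrivial S] [Module.Free ℤ S] [Module.Finite ℤ S]
    [CharZero S]
    [Algebra R S] [Module.Finite R S]
    (K L : Type*) [Field K] [Field L] [Algebra R K] [IsFractionRing R K]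
    [Algebra S L] [IsFractionRing S L] [Algebra K L] [Algebra R L]
    [IsScalarTower R S L] [IsScalarTower R K L]
    (p : Ideal R) (hp : p.IsPrime) (hp0 : p ≠ ⊥)
    (hsplit : ∀ P : Ideal S, P.IsPrime → Ideal.comap (algebraMap R S) P = p →
      Ideal.ramificationIdx' p P = 1 ∧
      Ideal.inertiaDeg' p P = 1) :
    Module.finrank K L ≤
      Nat.card {P : Ideal S // P.IsPrime ∧ Ideal.absNorm P = Ideal.absNorm p} := by
  classical
  haveI hpm : p.IsMaximal := hp.isMaximal hp0
  set T := (UniqueFactorizationMonoid.factors (Ideal.map (algebraMap R S) p)).toFinset with hT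
  have hprime : ∀ P ∈ T, P.IsPrime := fun P hP =>
    Ideal.isPrime_of_prime (prime_of_factor _ (Multiset.mem_toFinset.mp hP))
  have hcomap : ∀ P ∈ T, Ideal.comap (algebraMap R S) P = p := by
    intro P hP
    haveI := hprime P hP
    have hle : Ideal.map (algebraMap R S) p ≤ P :=
      Ideal.le_of_dvd (dvd_of_mem_factors (Multiset.mem_toFinset.mp hP))
    have h1 : p ≤ Ideal.comap (algebraMap R S) P := Ideal.map_le_iff_le_comap.mp hle
    have h2 : (Ideal.comap (algebraMap R S) P).IsPrime := Ideal.IsPrime.comap _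
    exact (hpm.eq_of_le h2.ne_top h1).symm
  have hsum := Ideal.sum_ramification_inertia (S := S) (p := p) K L hp0
  have hcard : T.card = Module.finrank K L := by
    rw [← hsum, IsDedekindDomain.primesOverFinset, ← hT]
    rw [Finset.card_eq_sum_ones]
    refine Finset.sum_congr rfl fun P hP => ?_
    obtain ⟨he, hf⟩ := hsplit P (hprime P hP) (hcomap P hP)
    rw [he, hf]
  have hfinq : Finite (R ⧸ p) := by
    rw [← Ideal.absNorm_ne_zero_iff, Ne, Ideal.absNorm_eq_zero_iff]
    exact hp0
  have habs : ∀ P ∈ T, Ideal.absNorm P = Ideal.absNorm p := by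
    intro P hP
    haveI hPp : P.IsPrime := hprime P hP
    have hc := hcomap P hP
    haveI : P.LiesOver p := ⟨hc.symm⟩
    have hf := (hsplit P hPp hc).2
    rw [Ideal.inertiaDeg'_algebraMap] at hf
    letI := Ideal.Quotient.field p
    haveI : FiniteDimensional (R ⧸ p) (S ⧸ P) :=
      Module.finite_of_finrank_pos (by rw [hf]; norm_num)
    let b := Module.finBasisOfFinrankEq (R ⧸ p) (S ⧸ P) hf
    have hcardq : Nat.card (S ⧸ P) = Nat.card (R ⧸ p) :=
      Nat.card_congr (b.equivFun.toEquiv.trans (Equiv.funUnique (Fin 1) (R ⧸ p)))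
    rw [Ideal.absNorm_apply, Submodule.cardQuot_apply,
      Ideal.absNorm_apply, Submodule.cardQuot_apply, hcardq]
  haveI : Finite {P : Ideal S // P.IsPrime ∧ Ideal.absNorm P = Ideal.absNorm p} :=
    Set.Finite.to_subtype
      ((Ideal.finite_setOf_absNorm_eq (Ideal.absNorm p)).subset fun I hI => hI.2)
  have hinj : Function.Injective (fun P : T =>
      (⟨P.1, hprime P.1 P.2, habs P.1 P.2⟩ :
        {P : Ideal S // P.IsPrime ∧ Ideal.absNorm P = Ideal.absNorm p})) := by
    intro a b h
    exact Subtype.ext (by have := congrArg Subtype.val h; exact this)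
  have := Nat.card_le_card_of_injective _ hinj
  rwa [Nat.card_eq_finsetCard, hcard] at this





set_option synthInstance.maxHeartbeats 800000 in
set_option maxHeartbeats 1600000 in
/-- Proposition `propdec`, first part: if `p` is a nonzero prime of `O_K`, `K = K_0`, splitting
completely in every field of a tower with `φ_∞ > 0`, then
`liminf Φ_{Np}(K_i)/g_{K_i} ≥ φ_∞/[K:ℚ] > 0`. -/
theorem liminf_phi_of_split_prime
    (K : ℕ → IntermediateField ℚ Qbar)
    [∀ i, FiniteDimensional ℚ (K i)]
    (hlt : ∀ i, K i < K (i + 1)) (hle : ∀ i, K 0 ≤ K i)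
    (p : Ideal (𝓞 (K 0))) (hp : p.IsPrime) (hp0 : p ≠ ⊥)
    (hsplit : ∀ i, SplitsCompletely (hle i) p)
    (φ : ℝ) (hφpos : 0 < φ)
    (hφ : Tendsto (fun i => (Module.finrank ℚ (K i) : ℝ) / genus (K i)) atTop (𝓝 φ)) :
    φ / (Module.finrank ℚ (K 0) : ℝ) ≤
      liminf (fun i => (PhiQ (K i) (Ideal.absNorm p) : ℝ) / genus (K i)) atTop ∧
    0 < φ / (Module.finrank ℚ (K 0) : ℝ) := by
  classical
  have hn0 : 0 < Module.finrank ℚ (K 0) := Module.finrank_pos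
  have hq2 : 2 ≤ Ideal.absNorm p := by
    have h0 : Ideal.absNorm p ≠ 0 := by rw [Ne, Ideal.absNorm_eq_zero_iff]; exact hp0
    have h1 : Ideal.absNorm p ≠ 1 := by rw [Ne, Ideal.absNorm_eq_one_iff]; exact hp.ne_top
    omega
  have hPhiQ : ∀ i, PhiQ (K i) (Ideal.absNorm p) =
      Nat.card {P : Ideal (𝓞 (K i)) // P.IsPrime ∧ Ideal.absNorm P = Ideal.absNorm p} := by
    intro i
    rw [PhiQ, dif_pos]
    infer_instance
  have key : ∀ i, Module.finrank ℚ (K i) ≤ Module.finrank ℚ (K 0) * PhiQ (K i) (Ideal.absNorm p)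
      ∧ PhiQ (K i) (Ideal.absNorm p) ≤ Ideal.absNorm p * Module.finrank ℚ (K i) := by
    intro i
    letI : Algebra (K 0) (K i) := (IntermediateField.inclusion (hle i)).toRingHom.toAlgebra
    haveI : IsScalarTower ℚ (K 0) (K i) :=
      IsScalarTower.of_algebraMap_eq fun x =>
        ((IntermediateField.inclusion (hle i)).commutes x).symm
    letI : Algebra (𝓞 (K 0)) (𝓞 (K i)) :=
      (RingOfIntegers.mapRingHom (IntermediateField.inclusion (hle i))).toAlgebra
    letI : Algebra (𝓞 (K 0)) (K i) :=
      ((algebraMap ((K 0) : Type) (K i)).comp (algebraMap (𝓞 (K 0)) (K 0))).toAlgebra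
    haveI t1 : IsScalarTower (𝓞 (K 0)) ((K 0) : Type) (K i) := IsScalarTower.of_algebraMap_eq' rfl
    haveI t2 : IsScalarTower (𝓞 (K 0)) (𝓞 (K i)) (K i) :=
      IsScalarTower.of_algebraMap_eq fun x => rfl
    haveI : Module.Finite (𝓞 (K 0)) (𝓞 (K i)) :=
      Module.Finite.of_restrictScalars_finite ℤ _ _
    haveI : FiniteDimensional (K 0) (K i) := FiniteDimensional.right ℚ (K 0) (K i)
    have hlow := aux_lower ((K 0) : Type) ((K i) : Type) p hp hp0
      (fun P hP hc => hsplit i P hP hc)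
    have hup := aux_upper (S := 𝓞 (K i)) hq2
    have hmul : Module.finrank ℚ (K 0) * Module.finrank (K 0) (K i) = Module.finrank ℚ (K i) :=
      Module.finrank_mul_finrank ℚ (K 0) (K i)
    have hrk : Module.finrank ℤ (𝓞 (K i)) = Module.finrank ℚ (K i) :=
      RingOfIntegers.rank (K i)
    constructor
    · calc Module.finrank ℚ (K i)
          = Module.finrank ℚ (K 0) * Module.finrank (K 0) (K i) := hmul.symm
        _ ≤ _ := Nat.mul_le_mul_left _ (by rw [hPhiQ i]; exact hlow)
    · rw [hPhiQ i]
      calc Nat.card {P : Ideal (𝓞 (K i)) // P.IsPrime ∧ Ideal.absNorm P = Ideal.absNorm p}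
          ≤ Ideal.absNorm p * Module.finrank ℤ (𝓞 (K i)) := hup
        _ = Ideal.absNorm p * Module.finrank ℚ (K i) := by rw [hrk]
  have hn0' : (0:ℝ) < (Module.finrank ℚ (K 0) : ℝ) := by exact_mod_cast hn0
  have hpos : 0 < φ / (Module.finrank ℚ (K 0) : ℝ) := div_pos hφpos hn0'
  refine ⟨?_, hpos⟩
  have hgpos : ∀ᶠ i in atTop, 0 < genus (K i) := by
    have h2 : ∀ᶠ i in atTop, φ/2 < (Module.finrank ℚ (K i) : ℝ) / genus (K i) :=
      hφ.eventually (eventually_gt_nhds (half_lt_self hφpos))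
    filter_upwards [h2] with i hi
    by_contra hg
    push_neg at hg
    have hfr : (0:ℝ) ≤ (Module.finrank ℚ (K i) : ℝ) := by positivity
    have : (Module.finrank ℚ (K i) : ℝ) / genus (K i) ≤ 0 :=
      div_nonpos_iff.mpr (Or.inl ⟨hfr, hg⟩)
    have hφ2 : (0:ℝ) < φ/2 := half_pos hφpos
    linarith
  set u := fun i => (PhiQ (K i) (Ideal.absNorm p) : ℝ) / genus (K i) with hu
  set w := fun i => (Module.finrank ℚ (K i) : ℝ) / genus (K i) / (Module.finrank ℚ (K 0) : ℝ)
    with hw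
  have hwt : Tendsto w atTop (𝓝 (φ / (Module.finrank ℚ (K 0) : ℝ))) :=
    hφ.div_const _
  have hle' : ∀ᶠ i in atTop, w i ≤ u i := by
    filter_upwards [hgpos] with i hg
    have hk : (Module.finrank ℚ (K i) : ℝ) ≤
        (Module.finrank ℚ (K 0) : ℝ) * (PhiQ (K i) (Ideal.absNorm p) : ℝ) := by
      exact_mod_cast (key i).1
    simp only [hu, hw]
    rw [div_div, div_le_div_iff₀ (by positivity) hg]
    nlinarith [hg.le]
  have hub : ∀ᶠ i in atTop, u i ≤ (Ideal.absNorm p : ℝ) * (φ + 1) := by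
    have h2 : ∀ᶠ i in atTop, (Module.finrank ℚ (K i) : ℝ) / genus (K i) < φ + 1 :=
      hφ.eventually (eventually_lt_nhds (lt_add_one φ))
    filter_upwards [hgpos, h2] with i hg hlt
    have hk : (PhiQ (K i) (Ideal.absNorm p) : ℝ) ≤
        (Ideal.absNorm p : ℝ) * (Module.finrank ℚ (K i) : ℝ) := by
      exact_mod_cast (key i).2
    have hfr : (Module.finrank ℚ (K i) : ℝ) ≤ (φ + 1) * genus (K i) := by
      rw [div_lt_iff₀ hg] at hlt; linarith
    have hq' : (2:ℝ) ≤ (Ideal.absNorm p : ℝ) := by exact_mod_cast hq2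
    simp only [hu]
    rw [div_le_iff₀ hg]
    nlinarith
  have hcb : atTop.IsCoboundedUnder (· ≥ ·) u :=
    Filter.IsBoundedUnder.isCoboundedUnder_ge
      ⟨(Ideal.absNorm p : ℝ) * (φ + 1), by simpa [Filter.eventually_map] using hub⟩
  have hbd : atTop.IsBoundedUnder (· ≥ ·) w := hwt.isBoundedUnder_ge
  calc φ / (Module.finrank ℚ (K 0) : ℝ) = liminf w atTop := hwt.liminf_eq.symm
    _ ≤ liminf u atTop := liminf_le_liminf hle' hbd hcb

end
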